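/- For all δ, ε, η ∈ (0,1) there exists n₀ such that the following holds for all n ≥ n₀. Let H be a 3-partite 3-graph with vertex classes A, B and T (every edge of H has exactly one vertex in each class), where |A| = |B| = n and |T| ≥ εn, and suppose that for every A′ ⊆ A and B′ ⊆ B with |A′|, |B′| ≥ εn there are at least δ|A′||B′||T| edges of H with one vertex in each of A′, B′ and T. Then H contains a collection of at most ηn pairwise vertex-disjoint double pyramids, each having its two apexes in T and its cycle vertices alternating between A and B, which together cover at least (1−ε)n vertices of A and at least (1−ε)n vertices of B. -/

import Mathlib

/-- A *double pyramid* in a 3-graph with edge set `E`: two distinct apexes `x, y` and a cycle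
`v₁ … v_m` (with `m ≥ 3`) of distinct vertices avoiding the apexes, such that all the triples
`{x, vᵢ, vᵢ₊₁}` and `{y, vᵢ, vᵢ₊₁}` (indices mod `m`) are edges. It is a triangulation of the
2-sphere. -/
structure DoublePyramid (V : Type*) [DecidableEq V] (E : Finset (Finset V)) where
  m : ℕ
  hm : 3 ≤ m
  x : V
  y : V
  hxy : x ≠ y
  v : ZMod m → V
  hv : Function.Injective v
  hvx : ∀ i, v i ≠ x
  hvy : ∀ i, v i ≠ y
  hE : ∀ i, ({x, v i, v (i + 1)} : Finset V) ∈ E ∧ ({y, v i, v (i + 1)} : Finset V) ∈ E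

/-- The set of vertices of a double pyramid. -/
def DoublePyramid.verts {V : Type*} [DecidableEq V] {E : Finset (Finset V)}
    (P : DoublePyramid V E) : Set V :=
  {P.x, P.y} ∪ Set.range P.v

/-- for all `δ, ε, η ∈ (0,1)` there is `n₀` such that for all `n ≥ n₀` the
following holds. If `H` is a 3-partite 3-graph with classes `A`, `B`, `T`, `|A| = |B| = n`,
`|T| ≥ εn`, and for all `A' ⊆ A`, `B' ⊆ B` with `|A'|, |B'| ≥ εn` there are at least
`δ|A'||B'||T|` edges with one vertex in each of `A'`, `B'`, `T`, then `H` contains at most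
`ηn` pairwise vertex-disjoint double pyramids, each with both apexes in `T` and cycle
alternating between `A` and `B`, together covering at least `(1-ε)n` vertices of each of
`A` and `B`. -/

lemma exists_cycle {V : Type} [Fintype V] [DecidableEq V] (S : Finset V)
    (adj : V → V → Prop) [DecidableRel adj]
    (hsym : ∀ u v, adj u v → adj v u)
    (hSadj : ∀ u v, adj u v → u ∈ S ∧ v ∈ S)
    (hirr : ∀ v, ¬ adj v v)
    (d : ℕ) (hd2 : 2 ≤ d)
    (hdeg : ∀ v ∈ S, d ≤ (S.filter (adj v)).card)
    (hne : S.Nonempty) :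
    ∃ (m : ℕ), d + 1 ≤ m ∧ ∃ (v : ZMod m → V), Function.Injective v ∧
      (∀ i, v i ∈ S) ∧ ∀ i, adj (v i) (v (i + 1)) := by
  classical
  set P : List V → Prop := fun l => l ≠ [] ∧ l.Nodup ∧ l.Chain' adj ∧ ∀ x ∈ l, x ∈ S with hP
  -- there is a maximal path
  have hmax : ∃ l, P l ∧ ∀ x, ¬ P (x :: l) := by
    by_contra h
    push_neg at h
    have hgrow : ∀ k, ∃ l, P l ∧ k ≤ l.length := by
      intro k
      induction k with
      | zero =>
        obtain ⟨v0, hv0⟩ := hne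
        exact ⟨[v0], ⟨by simp, by simp, List.isChain_singleton v0, by simpa using hv0⟩, by simp⟩
      | succ k ih =>
        obtain ⟨l, hl, hlen⟩ := ih
        obtain ⟨x, hx⟩ := h l hl
        exact ⟨x :: l, hx, by simpa using Nat.succ_le_succ hlen⟩
    obtain ⟨l, hl, hlen⟩ := hgrow (Fintype.card V + 1)
    have := hl.2.1.length_le_card
    omega
  obtain ⟨l, ⟨hne', hnd, hch, hmem⟩, hmaxl⟩ := hmax
  obtain ⟨u, rest, rfl⟩ : ∃ u rest, l = u :: rest := by
    cases l with
    | nil => exact absurd rfl hne'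
    | cons a r => exact ⟨a, r, rfl⟩
  set l : List V := u :: rest with hldef
  -- every neighbor of u lies on l
  have hnbr : ∀ x, adj u x → x ∈ l := by
    intro x hx
    by_contra hxl
    exact hmaxl x ⟨List.cons_ne_nil _ _, List.nodup_cons.2 ⟨hxl, hnd⟩,
      (List.isChain_cons_cons (R := adj) (a := x) (b := u) (l := rest)).2 ⟨hsym _ _ hx, hch⟩, by
        intro y hy
        rcases List.mem_cons.1 hy with rfl | hy
        · exact (hSadj u y hx).2
        · exact hmem y hy⟩
  have huS : u ∈ S := hmem u (by rw [hldef]; exact List.mem_cons_self)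
  set NB : Finset V := S.filter (adj u) with hNB
  have hNBl : ∀ x ∈ NB, x ∈ l := fun x hx => hnbr x (Finset.mem_filter.1 hx).2
  have hNBu : ∀ x ∈ NB, x ≠ u := by
    intro x hx h
    exact hirr u (h ▸ (Finset.mem_filter.1 hx).2)
  -- index function
  have hidx_get : ∀ x ∈ NB, ∃ h : l.idxOf x < l.length, l.get ⟨l.idxOf x, h⟩ = x := by
    intro x hx
    have : x ∈ l := hNBl x hx
    exact ⟨List.idxOf_lt_length_iff.2 this, List.idxOf_get _⟩
  have hinj : Set.InjOn (fun x => l.idxOf x) NB := by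
    intro x hx y hy hxy
    obtain ⟨h1, e1⟩ := hidx_get x hx
    obtain ⟨h2, e2⟩ := hidx_get y hy
    simp only at hxy
    rw [← e1, ← e2]
    congr 1
    exact Fin.ext hxy
  have hpos : ∀ x ∈ NB, 1 ≤ l.idxOf x := by
    intro x hx
    rcases Nat.eq_zero_or_pos (l.idxOf x) with h0 | h
    · exfalso
      obtain ⟨h1, e1⟩ := hidx_get x hx
      apply hNBu x hx
      rw [← e1]
      simp only [List.get_eq_getElem, h0]
      rfl
    · exact h
  -- some neighbor has index ≥ d
  have hbig : ∃ x ∈ NB, d ≤ l.idxOf x := by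
    by_contra h
    push_neg at h
    have hsub : NB.image (fun x => l.idxOf x) ⊆ Finset.Icc 1 (d - 1) := by
      intro i hi
      obtain ⟨x, hx, rfl⟩ := Finset.mem_image.1 hi
      exact Finset.mem_Icc.2 ⟨hpos x hx, by have := h x hx; omega⟩
    have h1 : NB.card = (NB.image (fun x => l.idxOf x)).card :=
      (Finset.card_image_of_injOn hinj).symm
    have h2 : (NB.image (fun x => l.idxOf x)).card ≤ d - 1 := by
      calc _ ≤ (Finset.Icc 1 (d-1)).card := Finset.card_le_card hsub
      _ = d - 1 := by simp
    have h3 : d ≤ NB.card := hdeg u huS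
    omega
  obtain ⟨x, hxNB, hdx⟩ := hbig
  obtain ⟨hxlt, hxget⟩ := hidx_get x hxNB
  set j : ℕ := l.idxOf x with hj
  refine ⟨j + 1, by omega, ?_⟩
  haveI : NeZero (j + 1) := ⟨by omega⟩
  haveI : Fact (1 < j + 1) := ⟨by omega⟩
  have hjlt : j + 1 ≤ l.length := hxlt
  set w : ZMod (j + 1) → V := fun i => l.get ⟨(ZMod.val i), by
    have := ZMod.val_lt i; omega⟩ with hw
  have hgetinj : Function.Injective l.get := List.nodup_iff_injective_get.1 hnd
  refine ⟨w, ?_, ?_, ?_⟩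
  · intro i1 i2 h12
    have h := hgetinj h12
    exact ZMod.val_injective _ (congrArg (fun f : Fin l.length => f.val) h)
  · intro i
    exact hmem _ (l.get_mem _)
  · intro i
    have hval1 : (1 : ZMod (j+1)).val = 1 := ZMod.val_one _
    have hvadd : (i + 1).val = (i.val + 1) % (j + 1) := by
      rw [ZMod.val_add, hval1]
    have hivlt : i.val < j + 1 := ZMod.val_lt i
    rcases Nat.lt_or_ge i.val j with hlt | hge
    · have hv2 : (i + 1).val = i.val + 1 := by
        rw [hvadd, Nat.mod_eq_of_lt (by omega)]
      have := (List.isChain_iff_getElem.1 hch) i.val (by omega)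
      simp only [hw, hv2]
      convert this using 2 <;> rfl
    · have hij : i.val = j := by omega
      have hv2 : (i + 1).val = 0 := by
        rw [hvadd, hij, Nat.mod_self]
      have h0 : l.get ⟨0, by omega⟩ = u := by simp [hldef, List.get]
      have hjx : l.get ⟨j, hxlt⟩ = x := hxget
      simp only [hw, hv2, hij]
      rw [hjx, h0]
      exact hsym _ _ (Finset.mem_filter.1 hxNB).2


lemma mindeg {V : Type} [DecidableEq V] (d : ℕ) :
    ∀ (s : ℕ) (A₀ B₀ : Finset V) (G : Finset (V × V)), A₀.card + B₀.card = s →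
    G ⊆ A₀ ×ˢ B₀ → 2 * d * (A₀.card + B₀.card) < G.card →
    ∃ A₁ B₁ : Finset V, A₁ ⊆ A₀ ∧ B₁ ⊆ B₀ ∧ A₁.Nonempty ∧
      (∀ a ∈ A₁, d ≤ (B₁.filter (fun b => (a, b) ∈ G)).card) ∧
      (∀ b ∈ B₁, d ≤ (A₁.filter (fun a => (a, b) ∈ G)).card) := by
  intro s
  induction s using Nat.strong_induction_on with
  | _ s ih =>
    intro A₀ B₀ G hs hsub hcard
    by_cases ha : ∃ a ∈ A₀, (B₀.filter (fun b => (a, b) ∈ G)).card < d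
    · obtain ⟨a, haA, hadeg⟩ := ha
      have h1 : 1 ≤ A₀.card := Finset.card_pos.2 ⟨a, haA⟩
      set G' : Finset (V × V) := G.filter (fun p => p.1 ≠ a) with hG'
      have hsub' : G' ⊆ (A₀.erase a) ×ˢ B₀ := by
        intro p hp
        obtain ⟨hpG, hpa⟩ := Finset.mem_filter.1 hp
        have := hsub hpG
        rw [Finset.mem_product] at this ⊢
        exact ⟨Finset.mem_erase.2 ⟨hpa, this.1⟩, this.2⟩
      have hdel : (G.filter (fun p => p.1 = a)).card < d := by
        calc (G.filter (fun p => p.1 = a)).card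
            ≤ (B₀.filter (fun b => (a, b) ∈ G)).card := by
              apply Finset.card_le_card_of_injOn (fun p => p.2)
              · intro p hp
                obtain ⟨hpG, hpa⟩ := Finset.mem_filter.1 hp
                refine Finset.mem_filter.2 ⟨(Finset.mem_product.1 (hsub hpG)).2, ?_⟩
                rwa [← hpa, Prod.mk.eta]
              · intro p hp q hq hpq
                obtain ⟨_, hpa⟩ := Finset.mem_filter.1 hp
                obtain ⟨_, hqa⟩ := Finset.mem_filter.1 hq
                exact Prod.ext (hpa.trans hqa.symm) hpq
          _ < d := hadeg
      have hGsplit : G'.card + (G.filter (fun p => p.1 = a)).card = G.card := by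
        have h := Finset.card_filter_add_card_filter_not (s := G) (p := fun p => p.1 = a)
        rw [hG']
        simp only [Ne] at *
        omega
      have hcard' : 2 * d * ((A₀.erase a).card + B₀.card) < G'.card := by
        rw [Finset.card_erase_of_mem haA]
        have hx : A₀.card + B₀.card = (A₀.card - 1 + B₀.card) + 1 := by omega
        have hy : 2*d*(A₀.card + B₀.card) = 2*d*(A₀.card - 1 + B₀.card) + 2*d := by
          rw [hx, Nat.mul_succ]
        omega
      exact (ih (A₀.card - 1 + B₀.card) (by omega) _ _ G' (by rw [Finset.card_erase_of_mem haA]) hsub' hcard').imp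
        (fun A₁ h => by
          obtain ⟨B₁, h1', h2', h3', h4', h5'⟩ := h
          refine ⟨B₁, h1'.trans (Finset.erase_subset _ _), h2', h3', ?_, ?_⟩
          · intro x hx
            refine le_trans (h4' x hx) (Finset.card_le_card ?_)
            intro b hb
            obtain ⟨hbB, hbG⟩ := Finset.mem_filter.1 hb
            exact Finset.mem_filter.2 ⟨hbB, (Finset.mem_filter.1 hbG).1⟩
          · intro b hb
            refine le_trans (h5' b hb) (Finset.card_le_card ?_)
            intro x hx
            obtain ⟨hxA, hxG⟩ := Finset.mem_filter.1 hx
            exact Finset.mem_filter.2 ⟨hxA, (Finset.mem_filter.1 hxG).1⟩)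
    · by_cases hb : ∃ b ∈ B₀, (A₀.filter (fun a => (a, b) ∈ G)).card < d
      · obtain ⟨b, hbB, hbdeg⟩ := hb
        have h1 : 1 ≤ B₀.card := Finset.card_pos.2 ⟨b, hbB⟩
        set G' : Finset (V × V) := G.filter (fun p => p.2 ≠ b) with hG'
        have hsub' : G' ⊆ A₀ ×ˢ (B₀.erase b) := by
          intro p hp
          obtain ⟨hpG, hpb⟩ := Finset.mem_filter.1 hp
          have := hsub hpG
          rw [Finset.mem_product] at this ⊢
          exact ⟨this.1, Finset.mem_erase.2 ⟨hpb, this.2⟩⟩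
        have hdel : (G.filter (fun p => p.2 = b)).card < d := by
          calc (G.filter (fun p => p.2 = b)).card
              ≤ (A₀.filter (fun a => (a, b) ∈ G)).card := by
                apply Finset.card_le_card_of_injOn (fun p => p.1)
                · intro p hp
                  obtain ⟨hpG, hpb⟩ := Finset.mem_filter.1 hp
                  refine Finset.mem_filter.2 ⟨(Finset.mem_product.1 (hsub hpG)).1, ?_⟩
                  rwa [← hpb, Prod.mk.eta]
                · intro p hp q hq hpq
                  obtain ⟨_, hpb⟩ := Finset.mem_filter.1 hp
                  obtain ⟨_, hqb⟩ := Finset.mem_filter.1 hq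
                  exact Prod.ext hpq (hpb.trans hqb.symm)
            _ < d := hbdeg
        have hGsplit : G'.card + (G.filter (fun p => p.2 = b)).card = G.card := by
          have h := Finset.card_filter_add_card_filter_not (s := G) (p := fun p => p.2 = b)
          rw [hG']
          simp only [Ne] at *
          omega
        have hcard' : 2 * d * (A₀.card + (B₀.erase b).card) < G'.card := by
          rw [Finset.card_erase_of_mem hbB]
          have hx : A₀.card + B₀.card = (A₀.card + (B₀.card - 1)) + 1 := by omega
          have hy : 2*d*(A₀.card + B₀.card) = 2*d*(A₀.card + (B₀.card - 1)) + 2*d := by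
            rw [hx, Nat.mul_succ]
          omega
        exact (ih (A₀.card + (B₀.card - 1)) (by omega) _ _ G'
          (by rw [Finset.card_erase_of_mem hbB]) hsub' hcard').imp
          (fun A₁ h => by
            obtain ⟨B₁, h1', h2', h3', h4', h5'⟩ := h
            refine ⟨B₁, h1', h2'.trans (Finset.erase_subset _ _), h3', ?_, ?_⟩
            · intro x hx
              refine le_trans (h4' x hx) (Finset.card_le_card ?_)
              intro c hc
              obtain ⟨hbB', hbG⟩ := Finset.mem_filter.1 hc
              exact Finset.mem_filter.2 ⟨hbB', (Finset.mem_filter.1 hbG).1⟩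
            · intro c hc
              refine le_trans (h5' c hc) (Finset.card_le_card ?_)
              intro y hy
              obtain ⟨hxA, hxG⟩ := Finset.mem_filter.1 hy
              exact Finset.mem_filter.2 ⟨hxA, (Finset.mem_filter.1 hxG).1⟩)
      · push_neg at ha hb
        have hGne : G.Nonempty := by
          rw [← Finset.card_pos]; omega
        obtain ⟨p, hp⟩ := hGne
        exact ⟨A₀, B₀, le_refl _, le_refl _, ⟨p.1, (Finset.mem_product.1 (hsub hp)).1⟩, ha, hb⟩


lemma triple_rot {V : Type} [DecidableEq V] (a b t : V) :
    ({a, b, t} : Finset V) = {t, a, b} := by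
  ext x; simp [or_comm, or_left_comm]

-- count edges: the filtered edge count is at most the sum over t of pair-degrees
lemma edge_count {V : Type} [Fintype V] [DecidableEq V]
    (A B T A₀ B₀ : Finset V) (E : Finset (Finset V))
    (hAB : Disjoint A B) (hAT : Disjoint A T) (hBT : Disjoint B T)
    (hpart : ∀ e ∈ E, ∃ a ∈ A, ∃ b ∈ B, ∃ t ∈ T, e = {a, b, t})
    (hA₀ : A₀ ⊆ A) (hB₀ : B₀ ⊆ B) (v₀ : V) :
    (E.filter fun e => (∃ a ∈ A₀, a ∈ e) ∧ ∃ b ∈ B₀, b ∈ e).card ≤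
      ∑ t ∈ T, ((A₀ ×ˢ B₀).filter (fun p => ({p.1, p.2, t} : Finset V) ∈ E)).card := by
  classical
  set G : V → Finset (V × V) :=
    fun t => (A₀ ×ˢ B₀).filter (fun p => ({p.1, p.2, t} : Finset V) ∈ E) with hG
  set target : Finset (V × V × V) :=
    T.biUnion (fun t => (G t).image (fun p => (p.1, p.2, t))) with htarget
  have key : ∀ e ∈ E.filter (fun e => (∃ a ∈ A₀, a ∈ e) ∧ ∃ b ∈ B₀, b ∈ e),
      ∃ q : V × V × V, q.1 ∈ A₀ ∧ q.2.1 ∈ B₀ ∧ q.2.2 ∈ T ∧ e = {q.1, q.2.1, q.2.2} := by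
    intro e he
    obtain ⟨heE, ⟨a', ha'A, ha'e⟩, ⟨b', hb'B, hb'e⟩⟩ := Finset.mem_filter.1 he
    obtain ⟨a, haA, b, hbB, t, htT, rfl⟩ := hpart e heE
    have ha'a : a' = a := by
      have := ha'e
      simp only [Finset.mem_insert, Finset.mem_singleton] at this
      rcases this with rfl | rfl | rfl
      · rfl
      · exact absurd (hA₀ ha'A) (Finset.disjoint_left.1 hAB · hbB)
      · exact absurd (hA₀ ha'A) (Finset.disjoint_left.1 hAT · htT)
    have hb'b : b' = b := by
      have := hb'e
      simp only [Finset.mem_insert, Finset.mem_singleton] at this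
      rcases this with rfl | rfl | rfl
      · exact absurd (hB₀ hb'B) (fun h => Finset.disjoint_left.1 hAB haA h)
      · rfl
      · exact absurd (hB₀ hb'B) (Finset.disjoint_left.1 hBT · htT)
    exact ⟨(a, b, t), ha'a ▸ ha'A, hb'b ▸ hb'B, htT, rfl⟩
  calc (E.filter fun e => (∃ a ∈ A₀, a ∈ e) ∧ ∃ b ∈ B₀, b ∈ e).card
      ≤ target.card := by
        apply Finset.card_le_card_of_injOn
          (fun e => if h : ∃ q : V × V × V, q.1 ∈ A₀ ∧ q.2.1 ∈ B₀ ∧ q.2.2 ∈ T ∧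
            e = {q.1, q.2.1, q.2.2} then h.choose else (v₀, v₀, v₀))
        · intro e he
          simp only [Finset.mem_coe]
          rw [dif_pos (key e he)]
          obtain ⟨h1, h2, h3, h4⟩ := (key e he).choose_spec
          refine Finset.mem_biUnion.2 ⟨_, h3, Finset.mem_image.2 ⟨((key e he).choose.1, (key e he).choose.2.1), ?_, rfl⟩⟩
          refine Finset.mem_filter.2 ⟨Finset.mem_product.2 ⟨h1, h2⟩, ?_⟩
          have heE := (Finset.mem_filter.1 he).1
          exact h4 ▸ heE
        · intro e1 he1 e2 he2 heq
          simp only at heq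
          rw [dif_pos (key e1 he1), dif_pos (key e2 he2)] at heq
          have s1 := (key e1 he1).choose_spec.2.2.2
          have s2 := (key e2 he2).choose_spec.2.2.2
          rw [s1, s2, heq]
    _ ≤ ∑ t ∈ T, ((G t).image (fun p => (p.1, p.2, t))).card := Finset.card_biUnion_le
    _ ≤ ∑ t ∈ T, (G t).card := Finset.sum_le_sum (fun t _ => Finset.card_image_le)


open Finset in
lemma apex_pair {W X : Type} [DecidableEq W] [DecidableEq X]
    (T' : Finset W) (AB : Finset X) (P : X → W → Prop) [∀ x t, Decidable (P x t)]
    (c : ℝ) (hc : 0 ≤ c)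
    (hbig : (T'.card : ℝ)^2 * c + T'.card * AB.card <
      ((∑ t ∈ T', (AB.filter (fun x => P x t)).card : ℕ) : ℝ)^2 / AB.card) :
    ∃ t ∈ T', ∃ t' ∈ T', t ≠ t' ∧
      c ≤ ((AB.filter (fun x => P x t ∧ P x t')).card : ℝ) := by
  classical
  by_contra hcon
  push_neg at hcon
  set d : X → ℕ := fun x => (T'.filter (fun t => P x t)).card with hdd
  set F : W → W → ℕ := fun t t' => (AB.filter (fun x => P x t ∧ P x t')).card with hFF
  have hd : ∀ x, d x = ∑ t ∈ T', if P x t then 1 else 0 := fun x => Finset.card_filter _ _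
  have hF : ∀ t t', F t t' = ∑ x ∈ AB, if P x t ∧ P x t' then 1 else 0 :=
    fun t t' => Finset.card_filter _ _
  have hSig : (∑ t ∈ T', (AB.filter (fun x => P x t)).card) = ∑ x ∈ AB, d x := by
    simp only [Finset.card_filter, hdd]
    rw [Finset.sum_comm]
  have hsq : ∑ x ∈ AB, d x ^ 2 = ∑ t ∈ T', ∑ t' ∈ T', F t t' := by
    calc ∑ x ∈ AB, d x ^ 2
        = ∑ x ∈ AB, ∑ t ∈ T', ∑ t' ∈ T', (if P x t ∧ P x t' then 1 else 0) := by
          refine Finset.sum_congr rfl fun x _ => ?_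
          rw [sq, hd x, Finset.sum_mul_sum]
          refine Finset.sum_congr rfl fun t _ => Finset.sum_congr rfl fun t' _ => ?_
          by_cases h1 : P x t <;> by_cases h2 : P x t' <;> simp [h1, h2]
      _ = ∑ t ∈ T', ∑ x ∈ AB, ∑ t' ∈ T', (if P x t ∧ P x t' then 1 else 0) := Finset.sum_comm
      _ = ∑ t ∈ T', ∑ t' ∈ T', F t t' := by
          refine Finset.sum_congr rfl fun t _ => ?_
          rw [Finset.sum_comm]
          exact Finset.sum_congr rfl fun t' _ => (hF t t').symm
  -- Cauchy–Schwarz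
  have hCS : ((∑ x ∈ AB, d x : ℕ) : ℝ)^2 ≤ (AB.card : ℝ) * ∑ x ∈ AB, ((d x : ℝ))^2 := by
    push_cast
    exact sq_sum_le_card_mul_sum_sq
  -- the pair sum splits into diagonal and off-diagonal parts
  have hsplit : ∑ t ∈ T', ∑ t' ∈ T', F t t' =
      ∑ q ∈ (T' ×ˢ T').filter (fun q => q.1 = q.2), F q.1 q.2 +
      ∑ q ∈ (T' ×ˢ T').filter (fun q => ¬ q.1 = q.2), F q.1 q.2 := by
    rw [Finset.sum_filter_add_sum_filter_not, Finset.sum_product]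
  have hdiag : (∑ q ∈ (T' ×ˢ T').filter (fun q => q.1 = q.2), F q.1 q.2 : ℝ) ≤
      (T'.card : ℝ) * AB.card := by
    have h1 : ((T' ×ˢ T').filter (fun q => q.1 = q.2)).card ≤ T'.card := by
      apply Finset.card_le_card_of_injOn (fun q => q.1)
      · intro q hq
        exact (Finset.mem_product.1 (Finset.mem_filter.1 hq).1).1
      · intro q hq q' hq' h
        have e1 := (Finset.mem_filter.1 hq).2
        have e2 := (Finset.mem_filter.1 hq').2
        simp only at e1 e2 h
        exact Prod.ext h (by rw [← e1, ← e2, h])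
    calc (∑ q ∈ (T' ×ˢ T').filter (fun q => q.1 = q.2), F q.1 q.2 : ℝ)
        ≤ ∑ q ∈ (T' ×ˢ T').filter (fun q => q.1 = q.2), (AB.card : ℝ) := by
          apply Finset.sum_le_sum
          intro q _
          exact_mod_cast Finset.card_le_card (Finset.filter_subset _ _)
      _ = (((T' ×ˢ T').filter (fun q => q.1 = q.2)).card : ℝ) * AB.card := by
          rw [Finset.sum_const, nsmul_eq_mul]
      _ ≤ (T'.card : ℝ) * AB.card := by
          apply mul_le_mul_of_nonneg_right _ (by positivity)
          exact_mod_cast h1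
  have hoff : (∑ q ∈ (T' ×ˢ T').filter (fun q => ¬ q.1 = q.2), F q.1 q.2 : ℝ) ≤
      (T'.card : ℝ)^2 * c := by
    have h1 : ((T' ×ˢ T').filter (fun q => ¬ q.1 = q.2)).card ≤ T'.card * T'.card := by
      calc _ ≤ (T' ×ˢ T').card := Finset.card_le_card (Finset.filter_subset _ _)
        _ = T'.card * T'.card := Finset.card_product _ _
    calc (∑ q ∈ (T' ×ˢ T').filter (fun q => ¬ q.1 = q.2), F q.1 q.2 : ℝ)
        ≤ ∑ q ∈ (T' ×ˢ T').filter (fun q => ¬ q.1 = q.2), c := by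
          apply Finset.sum_le_sum
          intro q hq
          obtain ⟨hqm, hqne⟩ := Finset.mem_filter.1 hq
          obtain ⟨h1', h2'⟩ := Finset.mem_product.1 hqm
          exact le_of_lt (hcon q.1 h1' q.2 h2' hqne)
      _ = (((T' ×ˢ T').filter (fun q => ¬ q.1 = q.2)).card : ℝ) * c := by
          rw [Finset.sum_const, nsmul_eq_mul]
      _ ≤ (T'.card : ℝ)^2 * c := by
          apply mul_le_mul_of_nonneg_right _ hc
          rw [sq]
          exact_mod_cast h1
  -- put it together
  have hchain : ((∑ t ∈ T', (AB.filter (fun x => P x t)).card : ℕ) : ℝ)^2 / AB.card ≤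
      (T'.card : ℝ)^2 * c + T'.card * AB.card := by
    have hsum2 : (∑ x ∈ AB, (d x : ℝ)^2) = ((∑ t ∈ T', ∑ t' ∈ T', F t t' : ℕ) : ℝ) := by
      push_cast [← hsq]
      rfl
    rcases Nat.eq_zero_or_pos AB.card with h0 | hpos
    · rw [h0]
      push_cast
      rw [div_zero]
      positivity
    · rw [div_le_iff₀ (by exact_mod_cast hpos)]
      calc ((∑ t ∈ T', (AB.filter (fun x => P x t)).card : ℕ) : ℝ)^2
          = ((∑ x ∈ AB, d x : ℕ) : ℝ)^2 := by rw [hSig]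
        _ ≤ (AB.card : ℝ) * ∑ x ∈ AB, ((d x : ℝ))^2 := hCS
        _ = (AB.card : ℝ) * ((∑ t ∈ T', ∑ t' ∈ T', F t t' : ℕ) : ℝ) := by rw [hsum2]
        _ ≤ (AB.card : ℝ) * ((T'.card : ℝ)^2 * c + T'.card * AB.card) := by
            apply mul_le_mul_of_nonneg_left _ (by positivity)
            rw [hsplit]
            push_cast
            calc (∑ q ∈ (T' ×ˢ T').filter (fun q => q.1 = q.2), (F q.1 q.2 : ℝ)) +
                  ∑ q ∈ (T' ×ˢ T').filter (fun q => ¬ q.1 = q.2), (F q.1 q.2 : ℝ)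
                ≤ (T'.card : ℝ) * AB.card + (T'.card : ℝ)^2 * c := by
                  apply add_le_add
                  · exact_mod_cast hdiag
                  · exact_mod_cast hoff
              _ = (T'.card : ℝ)^2 * c + T'.card * AB.card := by ring
        _ = ((T'.card : ℝ)^2 * c + T'.card * AB.card) * AB.card := by ring
  exact absurd (lt_of_lt_of_le hbig hchain) (lt_irrefl _)


lemma triple_swap {V : Type} [DecidableEq V] (a b t : V) :
    ({t, a, b} : Finset V) = {t, b, a} := by
  ext x; simp [or_comm, or_left_comm]

set_option maxHeartbeats 2000000 in
lemma find_pyramid {V : Type} [Fintype V] [DecidableEq V]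
    (δ ε : ℝ) (hδ0 : 0 < δ) (hδ1 : δ < 1) (hε0 : 0 < ε) (hε1 : ε < 1)
    (n M : ℕ) (hM2 : 2 ≤ M)
    (A B T : Finset V) (E : Finset (Finset V))
    (hAB : Disjoint A B) (hAT : Disjoint A T) (hBT : Disjoint B T)
    (hpart : ∀ e ∈ E, ∃ a ∈ A, ∃ b ∈ B, ∃ t ∈ T, e = {a, b, t})
    (hcardA : A.card = n) (hcardB : B.card = n)
    (hT : ε * n ≤ (T.card : ℝ))
    (hdens : ∀ A' ⊆ A, ∀ B' ⊆ B, ε * n ≤ (A'.card : ℝ) → ε * n ≤ (B'.card : ℝ) →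
      δ * A'.card * B'.card * T.card ≤
        ((E.filter fun e => (∃ a ∈ A', a ∈ e) ∧ ∃ b ∈ B', b ∈ e).card : ℝ))
    (hn1 : 8 / (δ^2 * ε^3) + 64 * M / (δ^2 * ε^2) + 1 ≤ (n:ℝ))
    (A₀ B₀ U : Finset V) (hA₀ : A₀ ⊆ A) (hB₀ : B₀ ⊆ B) (hU : U ⊆ T)
    (hA₀c : ε * n ≤ (A₀.card : ℝ)) (hB₀c : ε * n ≤ (B₀.card : ℝ))
    (hUc : (U.card : ℝ) ≤ δ * ε^3 * n / 2) :
    ∃ P : DoublePyramid V E, P.x ∈ T ∧ P.x ∉ U ∧ P.y ∈ T ∧ P.y ∉ U ∧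
      M + 1 ≤ P.m ∧ (∀ i, P.v i ∈ A₀ ∪ B₀) ∧
      (∀ i, (P.v i ∈ A ∧ P.v (i+1) ∈ B) ∨ (P.v i ∈ B ∧ P.v (i+1) ∈ A)) := by
  classical
  have hpos3 : (0:ℝ) < δ^2*ε^3 := by positivity
  have hpos2 : (0:ℝ) < δ^2*ε^2 := by positivity
  have hn0 : (1:ℝ) ≤ n := by
    have h1 : (0:ℝ) ≤ 8 / (δ^2 * ε^3) := by positivity
    have h2 : (0:ℝ) ≤ 64 * M / (δ^2 * ε^2) := by positivity
    linarith only [hn1, h1, h2]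
  have hnpos : 0 < n := by exact_mod_cast lt_of_lt_of_le zero_lt_one hn0
  have hεn : 0 < ε * n := by positivity
  have hkey : 8 < δ^2*ε^3*(n:ℝ) := by
    have h2 : (0:ℝ) ≤ 64 * M / (δ^2 * ε^2) := by positivity
    have h' : 8/(δ^2*ε^3) ≤ (n:ℝ) - 1 := by linarith only [hn1, h2]
    have h'' := (div_le_iff₀ hpos3).1 h'
    nlinarith only [h'', hpos3]
  have hkeyM : 64*(M:ℝ) < δ^2*ε^2*(n:ℝ) := by
    have h1 : (0:ℝ) ≤ 8 / (δ^2 * ε^3) := by positivity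
    have h' : 64*(M:ℝ)/(δ^2*ε^2) ≤ (n:ℝ) - 1 := by linarith only [hn1, h1]
    have h'' := (div_le_iff₀ hpos2).1 h'
    nlinarith only [h'', hpos2]
  have haA : (A₀.card : ℝ) ≤ n := by
    exact_mod_cast hcardA ▸ Finset.card_le_card hA₀
  have hbB : (B₀.card : ℝ) ≤ n := by
    exact_mod_cast hcardB ▸ Finset.card_le_card hB₀
  have hapos : (0:ℝ) < A₀.card := lt_of_lt_of_le hεn hA₀c
  have hbpos : (0:ℝ) < B₀.card := lt_of_lt_of_le hεn hB₀c
  obtain ⟨v₀, hv₀⟩ : A₀.Nonempty := Finset.card_pos.1 (by exact_mod_cast hapos)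
  set G : V → Finset (V × V) :=
    fun t => ((A₀ ×ˢ B₀).filter (fun p => ({p.1, p.2, t} : Finset V) ∈ E)) with hG
  have hGle : ∀ t, (G t).card ≤ A₀.card * B₀.card := by
    intro t
    calc (G t).card ≤ (A₀ ×ˢ B₀).card := Finset.card_le_card (Finset.filter_subset _ _)
      _ = A₀.card * B₀.card := Finset.card_product _ _
  have hcnt := hdens A₀ hA₀ B₀ hB₀ hA₀c hB₀c
  have hcnt2 := edge_count A B T A₀ B₀ E hAB hAT hBT hpart hA₀ hB₀ v₀
  set T' : Finset V := T \ U with hT'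
  have hsumsplit : (∑ t ∈ T', (G t).card) + ∑ t ∈ U, (G t).card = ∑ t ∈ T, (G t).card :=
    Finset.sum_sdiff hU
  have hUsum : ((∑ t ∈ U, (G t).card : ℕ) : ℝ) ≤ (U.card : ℝ) * (A₀.card * B₀.card) := by
    calc ((∑ t ∈ U, (G t).card : ℕ) : ℝ) ≤ ∑ t ∈ U, ((A₀.card : ℝ) * B₀.card) := by
          push_cast
          exact Finset.sum_le_sum (fun t _ => by exact_mod_cast hGle t)
      _ = (U.card : ℝ) * (A₀.card * B₀.card) := by rw [Finset.sum_const, nsmul_eq_mul]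
  have hτpos : (0:ℝ) < T.card := lt_of_lt_of_le hεn hT
  have hSig : δ / 2 * A₀.card * B₀.card * T.card ≤ ((∑ t ∈ T', (G t).card : ℕ) : ℝ) := by
    have h1 : δ * A₀.card * B₀.card * T.card ≤ ((∑ t ∈ T, (G t).card : ℕ) : ℝ) :=
      le_trans hcnt (by exact_mod_cast hcnt2)
    have h2 : ((∑ t ∈ T, (G t).card : ℕ) : ℝ) =
        ((∑ t ∈ T', (G t).card : ℕ) : ℝ) + ((∑ t ∈ U, (G t).card : ℕ) : ℝ) := by
      rw [← hsumsplit]; push_cast; ring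
    have hε2 : ε^2 ≤ 1 := by nlinarith only [hε0, hε1]
    have hε3 : ε^3 * n ≤ (T.card : ℝ) := by
      have hh : ε^3 ≤ ε := by nlinarith only [hε0, hε1, hε2]
      have hh2 := mul_le_mul_of_nonneg_right hh (show (0:ℝ) ≤ n by positivity)
      linarith only [hh2, hT]
    have h3 : (U.card : ℝ) * (A₀.card * B₀.card) ≤ δ / 2 * A₀.card * B₀.card * T.card := by
      have hs1 : (U.card : ℝ) * (A₀.card * B₀.card) ≤
          (δ * ε^3 * n / 2) * (A₀.card * B₀.card) :=
        mul_le_mul_of_nonneg_right hUc (by positivity)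
      have hs2 := mul_le_mul_of_nonneg_left hε3
        (show (0:ℝ) ≤ δ/2*(A₀.card*B₀.card) by positivity)
      nlinarith
    linarith
  set c : ℝ := δ^2 * ε^2 / 16 * n^2 with hc
  have hABcard : ((A₀ ×ˢ B₀).card : ℝ) = (A₀.card : ℝ) * B₀.card := by
    rw [Finset.card_product]; push_cast; ring
  have hABpos : (0:ℝ) < (A₀.card : ℝ) * B₀.card := by positivity
  have hpair : ∃ t ∈ T', ∃ t' ∈ T', t ≠ t' ∧
      c ≤ (((A₀ ×ˢ B₀).filter (fun x =>
        (({x.1, x.2, t} : Finset V) ∈ E) ∧ (({x.1, x.2, t'} : Finset V) ∈ E))).card : ℝ) := by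
    apply apex_pair T' (A₀ ×ˢ B₀) (fun x t => ({x.1, x.2, t} : Finset V) ∈ E) c (by positivity)
    have hT'le : (T'.card : ℝ) ≤ T.card := by
      exact_mod_cast Finset.card_le_card (Finset.sdiff_subset)
    have hT'0 : (0:ℝ) ≤ T'.card := by positivity
    have hSig0 : (0:ℝ) ≤ δ / 2 * A₀.card * B₀.card * T.card := by positivity
    have hsq2 : (δ / 2 * A₀.card * B₀.card * T.card)^2 ≤
        ((∑ t ∈ T', (G t).card : ℕ) : ℝ)^2 := by
      apply pow_le_pow_left₀ hSig0 hSig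
    have hstep : (δ^2/4) * ((A₀.card:ℝ) * B₀.card) * (T.card:ℝ)^2 ≤
        ((∑ t ∈ T', (G t).card : ℕ) : ℝ)^2 / ((A₀ ×ˢ B₀).card : ℝ) := by
      rw [hABcard, le_div_iff₀ hABpos]
      nlinarith only [hsq2]
    have hτ8 : 8 < δ^2*ε^2*(T.card:ℝ) := by
      have h1 : δ^2*ε^2*(ε*n) ≤ δ^2*ε^2*(T.card:ℝ) :=
        mul_le_mul_of_nonneg_left hT (by positivity)
      nlinarith only [h1, hkey]
    have habn : (A₀.card:ℝ) * B₀.card ≤ (n:ℝ)*n :=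
      mul_le_mul haA hbB hbpos.le (Nat.cast_nonneg n)
    have habε : (ε*(n:ℝ))*(ε*(n:ℝ)) ≤ (A₀.card:ℝ) * B₀.card :=
      mul_le_mul hA₀c hB₀c hεn.le hapos.le
    have hfin : ((T'.card:ℝ))^2 * c + (T'.card:ℝ) * (((A₀ ×ˢ B₀).card) : ℝ) <
        (δ^2/4) * ((A₀.card:ℝ) * B₀.card) * (T.card:ℝ)^2 := by
      rw [hABcard, hc]
      have s1 : ((T'.card:ℝ))^2 * (δ^2*ε^2/16*(n:ℝ)^2) + (T'.card:ℝ)*((A₀.card:ℝ)*B₀.card) ≤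
          (δ^2*ε^2/16)*(n:ℝ)^2*(T.card:ℝ)^2 + (T.card:ℝ)*((n:ℝ)*n) := by
        have q1 : ((T'.card:ℝ))^2 ≤ (T.card:ℝ)^2 := by
          have := mul_le_mul hT'le hT'le hT'0 hτpos.le
          nlinarith only [this]
        have q2 : (T'.card:ℝ)*((A₀.card:ℝ)*B₀.card) ≤ (T.card:ℝ)*((n:ℝ)*n) := by
          apply mul_le_mul hT'le habn (by positivity) (by positivity)
        have q3 := mul_le_mul_of_nonneg_right q1
          (show (0:ℝ) ≤ δ^2*ε^2/16*(n:ℝ)^2 by positivity)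
        linarith only [q2, q3]
      have s2 : (δ^2*ε^2/16)*(n:ℝ)^2*(T.card:ℝ)^2 + (T.card:ℝ)*((n:ℝ)*n) <
          (δ^2*ε^2/4)*(n:ℝ)^2*(T.card:ℝ)^2 := by
        have hq : 1 * ((T.card:ℝ)*(n:ℝ)^2) < (3/16*(δ^2*ε^2*(T.card:ℝ)))*((T.card:ℝ)*(n:ℝ)^2) := by
          apply mul_lt_mul_of_pos_right _ (by positivity)
          linarith only [hτ8]
        linarith only [hq]
      have s3 : (δ^2*ε^2/4)*(n:ℝ)^2*(T.card:ℝ)^2 ≤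
          (δ^2/4) * ((A₀.card:ℝ) * B₀.card) * (T.card:ℝ)^2 := by
        have := mul_le_mul_of_nonneg_left habε
          (show (0:ℝ) ≤ δ^2/4*(T.card:ℝ)^2 by positivity)
        nlinarith only [this]
      linarith only [s1, s2, s3]
    calc ((T'.card:ℝ))^2 * c + (T'.card:ℝ) * (((A₀ ×ˢ B₀).card) : ℝ)
        < (δ^2/4) * ((A₀.card:ℝ) * B₀.card) * (T.card:ℝ)^2 := hfin
      _ ≤ _ := hstep
  obtain ⟨t, htT', t', ht'T', htne, hGc⟩ := hpair
  obtain ⟨htT, htU⟩ := Finset.mem_sdiff.1 htT'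
  obtain ⟨ht'T, ht'U⟩ := Finset.mem_sdiff.1 ht'T'
  set G₂ : Finset (V × V) := (A₀ ×ˢ B₀).filter (fun x =>
    (({x.1, x.2, t} : Finset V) ∈ E) ∧ (({x.1, x.2, t'} : Finset V) ∈ E)) with hG₂
  have hG₂sub : G₂ ⊆ A₀ ×ˢ B₀ := Finset.filter_subset _ _
  have hG₂big : 2 * M * (A₀.card + B₀.card) < G₂.card := by
    have hr : ((2 * M * (A₀.card + B₀.card) : ℕ) : ℝ) < (G₂.card : ℝ) := by
      push_cast
      have hM0 : (0:ℝ) ≤ (M:ℝ) := Nat.cast_nonneg M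
      have h1 : 2*(M:ℝ)*((A₀.card:ℝ)+B₀.card) ≤ 4*M*n := by nlinarith only [haA, hbB, hM0]
      have h2 : 4*(M:ℝ)*n < c := by
        rw [hc]
        have h3 := mul_lt_mul_of_pos_right hkeyM (show (0:ℝ) < (n:ℝ)/16 by positivity)
        linarith only [h3]
      linarith only [hGc, h1, h2]
    exact_mod_cast hr
  obtain ⟨A₁, B₁, hA₁, hB₁, hA₁ne, hdegA, hdegB⟩ :=
    mindeg M (A₀.card + B₀.card) A₀ B₀ G₂ rfl hG₂sub hG₂big
  set adj : V → V → Prop := fun u w =>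
    (u ∈ A₁ ∧ w ∈ B₁ ∧ (u, w) ∈ G₂) ∨ (w ∈ A₁ ∧ u ∈ B₁ ∧ (w, u) ∈ G₂) with hadj
  letI : DecidableRel adj := fun u w => Classical.dec _
  set S : Finset V := A₁ ∪ B₁ with hS
  have hA₁B₁ : Disjoint A₁ B₁ := by
    apply Finset.disjoint_left.2
    intro x hx1 hx2
    exact Finset.disjoint_left.1 hAB (hA₀ (hA₁ hx1)) (hB₀ (hB₁ hx2))
  have hsym : ∀ u w, adj u w → adj w u := by
    intro u w h
    rcases h with h | h
    · exact Or.inr h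
    · exact Or.inl h
  have hSadj : ∀ u w, adj u w → u ∈ S ∧ w ∈ S := by
    intro u w h
    rcases h with ⟨h1, h2, _⟩ | ⟨h1, h2, _⟩
    · exact ⟨Finset.mem_union_left _ h1, Finset.mem_union_right _ h2⟩
    · exact ⟨Finset.mem_union_right _ h2, Finset.mem_union_left _ h1⟩
  have hirr : ∀ w, ¬ adj w w := by
    intro w h
    rcases h with ⟨h1, h2, _⟩ | ⟨h1, h2, _⟩ <;>
      exact Finset.disjoint_left.1 hA₁B₁ h1 h2
  have hdeg : ∀ w ∈ S, M ≤ (S.filter (adj w)).card := by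
    intro w hw
    rcases Finset.mem_union.1 hw with hw1 | hw1
    · refine le_trans (hdegA w hw1) (Finset.card_le_card ?_)
      intro b hb
      obtain ⟨hbB₁, hbG⟩ := Finset.mem_filter.1 hb
      exact Finset.mem_filter.2 ⟨Finset.mem_union_right _ hbB₁, Or.inl ⟨hw1, hbB₁, hbG⟩⟩
    · refine le_trans (hdegB w hw1) (Finset.card_le_card ?_)
      intro a ha
      obtain ⟨haA₁, haG⟩ := Finset.mem_filter.1 ha
      exact Finset.mem_filter.2 ⟨Finset.mem_union_left _ haA₁, Or.inr ⟨haA₁, hw1, haG⟩⟩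
  have hSne : S.Nonempty := by
    obtain ⟨a, ha⟩ := hA₁ne
    exact ⟨a, Finset.mem_union_left _ ha⟩
  obtain ⟨m, hm, w, hwinj, hwS, hwadj⟩ :=
    exists_cycle S adj hsym hSadj hirr M hM2 hdeg hSne
  have hwA₀B₀ : ∀ i, w i ∈ A₀ ∪ B₀ := by
    intro i
    rcases Finset.mem_union.1 (hwS i) with h | h
    · exact Finset.mem_union_left _ (hA₁ h)
    · exact Finset.mem_union_right _ (hB₁ h)
  have hwAB : ∀ i, w i ∈ A ∪ B := by
    intro i
    rcases Finset.mem_union.1 (hwA₀B₀ i) with h | h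
    · exact Finset.mem_union_left _ (hA₀ h)
    · exact Finset.mem_union_right _ (hB₀ h)
  have hABTdisj : ∀ z, z ∈ A ∪ B → z ∈ T → False := by
    intro z hz hzT
    rcases Finset.mem_union.1 hz with h | h
    · exact Finset.disjoint_left.1 hAT h hzT
    · exact Finset.disjoint_left.1 hBT h hzT
  have hEmem : ∀ i, ({t, w i, w (i+1)} : Finset V) ∈ E ∧ ({t', w i, w (i+1)} : Finset V) ∈ E := by
    intro i
    rcases hwadj i with ⟨h1, h2, hg⟩ | ⟨h1, h2, hg⟩
    · obtain ⟨_, he1, he2⟩ := Finset.mem_filter.1 hg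
      rw [triple_rot (w i) (w (i+1)) t] at he1
      rw [triple_rot (w i) (w (i+1)) t'] at he2
      exact ⟨he1, he2⟩
    · obtain ⟨_, he1, he2⟩ := Finset.mem_filter.1 hg
      rw [triple_rot (w (i+1)) (w i) t] at he1
      rw [triple_rot (w (i+1)) (w i) t'] at he2
      rw [triple_swap] at he1 he2
      exact ⟨he1, he2⟩
  refine ⟨⟨m, by omega, t, t', htne, w, hwinj,
    fun i h => hABTdisj (w i) (hwAB i) (h ▸ htT),
    fun i h => hABTdisj (w i) (hwAB i) (h ▸ ht'T),
    hEmem⟩, htT, htU, ht'T, ht'U, hm, hwA₀B₀, ?_⟩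
  intro i
  rcases hwadj i with ⟨h1, h2, _⟩ | ⟨h1, h2, _⟩
  · exact Or.inl ⟨hA₀ (hA₁ h1), hB₀ (hB₁ h2)⟩
  · exact Or.inr ⟨hB₀ (hB₁ h2), hA₀ (hA₁ h1)⟩

set_option maxHeartbeats 2000000 in
lemma cover {V : Type} [Fintype V] [DecidableEq V]
    (δ ε : ℝ) (hδ0 : 0 < δ) (hδ1 : δ < 1) (hε0 : 0 < ε) (hε1 : ε < 1)
    (n M : ℕ) (hM2 : 2 ≤ M)
    (A B T : Finset V) (E : Finset (Finset V))
    (hAB : Disjoint A B) (hAT : Disjoint A T) (hBT : Disjoint B T)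
    (hpart : ∀ e ∈ E, ∃ a ∈ A, ∃ b ∈ B, ∃ t ∈ T, e = {a, b, t})
    (hcardA : A.card = n) (hcardB : B.card = n)
    (hT : ε * n ≤ (T.card : ℝ))
    (hdens : ∀ A' ⊆ A, ∀ B' ⊆ B, ε * n ≤ (A'.card : ℝ) → ε * n ≤ (B'.card : ℝ) →
      δ * A'.card * B'.card * T.card ≤
        ((E.filter fun e => (∃ a ∈ A', a ∈ e) ∧ ∃ b ∈ B', b ∈ e).card : ℝ))
    (hn1 : 8 / (δ^2 * ε^3) + 64 * M / (δ^2 * ε^2) + 1 ≤ (n:ℝ))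
    (hM16 : 16 ≤ δ * ε^3 * M) :
    ∀ k, ∀ A₀ B₀ U : Finset V, A₀ ⊆ A → B₀ ⊆ B → U ⊆ T →
      A₀.card = k → B₀.card = k → M * U.card ≤ 8 * (n - k) →
      ∃ (N : ℕ) (P : Fin N → DoublePyramid V E),
        M * N ≤ 2 * k ∧
        (∀ j, (P j).x ∈ T ∧ (P j).y ∈ T) ∧
        (∀ j i, ((P j).v i ∈ A ∧ (P j).v (i+1) ∈ B) ∨
                ((P j).v i ∈ B ∧ (P j).v (i+1) ∈ A)) ∧
        (∀ j, (P j).verts ⊆ ((↑A₀ ∪ ↑B₀ ∪ ((↑T : Set V) \ ↑U)) : Set V)) ∧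
        (∀ j₁ j₂, j₁ ≠ j₂ → Disjoint (P j₁).verts (P j₂).verts) ∧
        ((k:ℝ) - ε * n ≤ (({a : V | a ∈ A₀ ∧ ∃ j, a ∈ (P j).verts}).ncard : ℝ)) ∧
        ((k:ℝ) - ε * n ≤ (({b : V | b ∈ B₀ ∧ ∃ j, b ∈ (P j).verts}).ncard : ℝ)) := by
  classical
  intro k
  induction k using Nat.strong_induction_on with
  | _ k ih =>
    intro A₀ B₀ U hA₀ hB₀ hU hcA₀ hcB₀ hUb
    by_cases hksmall : (k:ℝ) < ε * n
    · refine ⟨0, Fin.elim0, by simp, fun j => j.elim0, fun j => j.elim0, fun j => j.elim0,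
        fun j₁ => j₁.elim0, ?_, ?_⟩
      · exact le_trans (by linarith) (Nat.cast_nonneg _)
      · exact le_trans (by linarith) (Nat.cast_nonneg _)
    · push_neg at hksmall
      have hkn : k ≤ n := by rw [← hcA₀, ← hcardA]; exact Finset.card_le_card hA₀
      have hMpos : (0:ℝ) < M := by
        have : (0:ℕ) < M := by omega
        exact_mod_cast this
      have hεnpos : (0:ℝ) < ε * n := by
        have hn0 : (1:ℝ) ≤ n := by
          have h1 : (0:ℝ) ≤ 8 / (δ^2 * ε^3) := by positivity
          have h2 : (0:ℝ) ≤ 64 * M / (δ^2 * ε^2) := by positivity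
          linarith only [hn1, h1, h2]
        positivity
      have hk1 : 1 ≤ k := by
        by_contra h
        push_neg at h
        interval_cases k
        · simp at hksmall; linarith
      -- bound on U
      have hUc : (U.card : ℝ) ≤ δ * ε^3 * n / 2 := by
        have h1 : (M:ℝ) * U.card ≤ 8 * n := by
          have h1' : M * U.card ≤ 8 * n := le_trans hUb (by omega)
          exact_mod_cast h1'
        have h2 : 16 * (n:ℝ) ≤ δ * ε^3 * M * n :=
          mul_le_mul_of_nonneg_right hM16 (Nat.cast_nonneg n)
        have key : (M:ℝ) * (2 * U.card) ≤ (M:ℝ) * (δ * ε^3 * n) := by nlinarith only [h1, h2]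
        have := le_of_mul_le_mul_left key hMpos
        linarith only [this]
      have hA₀c : ε * n ≤ (A₀.card : ℝ) := by rw [hcA₀]; exact hksmall
      have hB₀c : ε * n ≤ (B₀.card : ℝ) := by rw [hcB₀]; exact hksmall
      obtain ⟨P₀, hxT, hxU, hyT, hyU, hm, hvA₀B₀, halt₀⟩ :=
        find_pyramid δ ε hδ0 hδ1 hε0 hε1 n M hM2 A B T E hAB hAT hBT hpart hcardA hcardB
          hT hdens hn1 A₀ B₀ U hA₀ hB₀ hU hA₀c hB₀c hUc
      haveI : NeZero P₀.m := ⟨by have := P₀.hm; omega⟩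
      set m : ℕ := P₀.m with hmdef
      set C : Finset V := Finset.image P₀.v Finset.univ with hC
      set IA : Finset (ZMod m) := Finset.univ.filter (fun i => P₀.v i ∈ A) with hIA
      set IB : Finset (ZMod m) := Finset.univ.filter (fun i => P₀.v i ∈ B) with hIB
      have hvAB : ∀ i, P₀.v i ∈ A ∪ B := by
        intro i
        rcases Finset.mem_union.1 (hvA₀B₀ i) with h | h
        · exact Finset.mem_union_left _ (hA₀ h)
        · exact Finset.mem_union_right _ (hB₀ h)
      have hnotboth : ∀ z, z ∈ A → z ∈ B → False := fun z h1 h2 =>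
        Finset.disjoint_left.1 hAB h1 h2
      have hIBalt : IB = Finset.univ.filter (fun i => ¬ P₀.v i ∈ A) := by
        ext i
        simp only [hIA, hIB, Finset.mem_filter, Finset.mem_univ, true_and]
        constructor
        · intro h
          exact fun hA' => hnotboth _ hA' h
        · intro h
          rcases Finset.mem_union.1 (hvAB i) with h' | h'
          · exact absurd h' h
          · exact h'
      have hIAIB : IA.card + IB.card = m := by
        rw [hIBalt]
        rw [Finset.card_filter_add_card_filter_not]
        simp [ZMod.card]
      have hcardbij : IA.card = IB.card := by
        apply Finset.card_bij (fun i _ => i + 1)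
        · intro i hi
          simp only [hIA, Finset.mem_filter, Finset.mem_univ, true_and] at hi
          simp only [hIB, Finset.mem_filter, Finset.mem_univ, true_and]
          rcases halt₀ i with ⟨_, h2⟩ | ⟨h1, _⟩
          · exact h2
          · exact absurd hi (fun h => hnotboth _ h h1)
        · intro i _ i' _ h
          exact add_right_cancel h
        · intro j hj
          simp only [hIB, Finset.mem_filter, Finset.mem_univ, true_and] at hj
          refine ⟨j - 1, ?_, by ring⟩
          simp only [hIA, Finset.mem_filter, Finset.mem_univ, true_and]
          rcases halt₀ (j - 1) with ⟨h1, _⟩ | ⟨_, h2⟩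
          · exact h1
          · rw [sub_add_cancel] at h2
            exact absurd h2 (fun h => hnotboth _ h hj)
      set r : ℕ := IA.card with hr
      have h2r : 2 * r = m := by omega
      have hrk : 2 ≤ r := by omega
      set CA : Finset V := C.filter (fun c => c ∈ A) with hCA
      set CB : Finset V := C.filter (fun c => c ∈ B) with hCB
      have hCAim : CA = IA.image P₀.v := by
        ext z
        simp only [hCA, hC, hIA, Finset.mem_filter, Finset.mem_image, Finset.mem_univ, true_and]
        constructor
        · rintro ⟨⟨i, rfl⟩, h2⟩
          exact ⟨i, h2, rfl⟩
        · rintro ⟨i, h1, rfl⟩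
          exact ⟨⟨i, rfl⟩, h1⟩
      have hCBim : CB = IB.image P₀.v := by
        ext z
        simp only [hCB, hC, hIB, Finset.mem_filter, Finset.mem_image, Finset.mem_univ, true_and]
        constructor
        · rintro ⟨⟨i, rfl⟩, h2⟩
          exact ⟨i, h2, rfl⟩
        · rintro ⟨i, h1, rfl⟩
          exact ⟨⟨i, rfl⟩, h1⟩
      have hCAcard : CA.card = r := by
        rw [hCAim]
        exact Finset.card_image_of_injective _ P₀.hv
      have hCBcard : CB.card = r := by
        rw [hCBim, Finset.card_image_of_injective _ P₀.hv, ← hcardbij]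
      have hCAsub : CA ⊆ A₀ := by
        intro z hz
        obtain ⟨hzC, hzA⟩ := Finset.mem_filter.1 hz
        obtain ⟨i, _, rfl⟩ := Finset.mem_image.1 hzC
        rcases Finset.mem_union.1 (hvA₀B₀ i) with h | h
        · exact h
        · exact absurd hzA (fun h' => hnotboth _ h' (hB₀ h))
      have hCBsub : CB ⊆ B₀ := by
        intro z hz
        obtain ⟨hzC, hzB⟩ := Finset.mem_filter.1 hz
        obtain ⟨i, _, rfl⟩ := Finset.mem_image.1 hzC
        rcases Finset.mem_union.1 (hvA₀B₀ i) with h | h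
        · exact absurd hzB (fun h' => hnotboth _ (hA₀ h) h')
        · exact h
      set A₀' : Finset V := A₀ \ CA with hA₀'
      set B₀' : Finset V := B₀ \ CB with hB₀'
      have hA₀'card : A₀'.card = k - r := by
        rw [hA₀', Finset.card_sdiff_of_subset hCAsub, hCAcard, hcA₀]
      have hB₀'card : B₀'.card = k - r := by
        rw [hB₀', Finset.card_sdiff_of_subset hCBsub, hCBcard, hcB₀]
      have hrk' : r ≤ k := by
        calc r = CA.card := hCAcard.symm
          _ ≤ A₀.card := Finset.card_le_card hCAsub
          _ = k := hcA₀
      set U' : Finset V := insert P₀.x (insert P₀.y U) with hU'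
      have hU'sub : U' ⊆ T := by
        intro z hz
        rcases Finset.mem_insert.1 hz with rfl | hz
        · exact hxT
        · rcases Finset.mem_insert.1 hz with rfl | hz
          · exact hyT
          · exact hU hz
      have hU'card : U'.card ≤ U.card + 2 := by
        calc U'.card ≤ (insert P₀.y U).card + 1 := Finset.card_insert_le _ _
          _ ≤ U.card + 2 := by
            have := Finset.card_insert_le P₀.y U
            omega
      have hMU' : M * U'.card ≤ 8 * (n - (k - r)) := by
        have s1 : M * U'.card ≤ M * U.card + 2 * M := by
          calc M * U'.card ≤ M * (U.card + 2) := Nat.mul_le_mul_left M hU'card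
            _ = M * U.card + 2 * M := by ring
        have s2 : 2 * M ≤ 8 * r := by omega
        have s3 : 8 * (n - k) + 8 * r = 8 * (n - (k - r)) := by omega
        omega
      obtain ⟨N', P', hMN', hapex', halt', hverts', hdisj', hcovA', hcovB'⟩ :=
        ih (k - r) (by omega) A₀' B₀' U'
          (le_trans (Finset.sdiff_subset) hA₀) (le_trans (Finset.sdiff_subset) hB₀)
          hU'sub hA₀'card hB₀'card hMU'
      -- combine
      set Q : Fin (N' + 1) → DoublePyramid V E :=
        fun j => if h : j = 0 then P₀ else P' (j.pred h) with hQ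
      have hQ0 : Q 0 = P₀ := dif_pos rfl
      have hQs : ∀ (j' : Fin N'), Q j'.succ = P' j' := by
        intro j'
        rw [hQ]
        simp only [dif_neg (Fin.succ_ne_zero j'), Fin.pred_succ]
      have hQcases : ∀ j : Fin (N' + 1), Q j = P₀ ∨ ∃ j', Q j = P' j' := by
        intro j
        rcases eq_or_ne j 0 with rfl | h
        · exact Or.inl hQ0
        · exact Or.inr ⟨j.pred h, dif_neg h⟩
      -- the vertex set of P₀
      have hvertsP₀ : P₀.verts = ({P₀.x, P₀.y} : Set V) ∪ Set.range P₀.v := rfl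
      have hrange : ∀ z, z ∈ Set.range P₀.v → z ∈ C := by
        rintro z ⟨i, rfl⟩
        exact Finset.mem_image.2 ⟨i, Finset.mem_univ i, rfl⟩
      have hCsplit : ∀ z, z ∈ C → z ∈ CA ∨ z ∈ CB := by
        intro z hz
        obtain ⟨i, _, rfl⟩ := Finset.mem_image.1 hz
        rcases Finset.mem_union.1 (hvAB i) with h | h
        · exact Or.inl (Finset.mem_filter.2 ⟨hz, h⟩)
        · exact Or.inr (Finset.mem_filter.2 ⟨hz, h⟩)
      have hTnotAB : ∀ z, z ∈ T → z ∈ A ∪ B → False := by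
        intro z hzT hz
        rcases Finset.mem_union.1 hz with h | h
        · exact Finset.disjoint_left.1 hAT h hzT
        · exact Finset.disjoint_left.1 hBT h hzT
      -- P₀.verts is disjoint from the region of the recursive pyramids
      have hdisj₀ : ∀ z, z ∈ P₀.verts →
          z ∉ ((↑A₀' ∪ ↑B₀' ∪ ((↑T : Set V) \ ↑U')) : Set V) := by
        intro z hz hz'
        rcases hz with hz | hz
        · -- z = x or y : z ∈ U' and z ∈ T
          have hzU' : z ∈ U' ∧ z ∈ T := by
            rcases hz with rfl | rfl
            · exact ⟨Finset.mem_insert_self _ _, hxT⟩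
            · exact ⟨Finset.mem_insert.2 (Or.inr (Finset.mem_insert_self _ _)), hyT⟩
          rcases hz' with hz' | hz'
          · rcases hz' with hz' | hz'
            · exact hTnotAB z hzU'.2 (Finset.mem_union_left _ (hA₀ (Finset.mem_sdiff.1 hz').1))
            · exact hTnotAB z hzU'.2 (Finset.mem_union_right _ (hB₀ (Finset.mem_sdiff.1 hz').1))
          · exact hz'.2 hzU'.1
        · -- z in the cycle
          have hzC : z ∈ C := hrange z hz
          rcases hz' with hz' | hz'
          · rcases hz' with hz' | hz'
            · -- z ∈ A₀' = A₀ \ CA, but z ∈ C and z ∈ A so z ∈ CA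
              obtain ⟨hzA₀, hzCA⟩ := Finset.mem_sdiff.1 hz'
              rcases hCsplit z hzC with h | h
              · exact hzCA h
              · exact hnotboth z (hA₀ hzA₀) ((Finset.mem_filter.1 h).2)
            · obtain ⟨hzB₀, hzCB⟩ := Finset.mem_sdiff.1 hz'
              rcases hCsplit z hzC with h | h
              · exact hnotboth z ((Finset.mem_filter.1 h).2) (hB₀ hzB₀)
              · exact hzCB h
          · -- z ∈ T \ U', but z ∈ A ∪ B
            obtain ⟨i, rfl⟩ := hz
            exact hTnotAB _ hz'.1 (hvAB i)
      refine ⟨N' + 1, Q, ?_, ?_, ?_, ?_, ?_, ?_, ?_⟩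
      · -- M * (N' + 1) ≤ 2 * k
        calc M * (N' + 1) = M * N' + M := by ring
          _ ≤ 2 * (k - r) + M := by omega
          _ ≤ 2 * k := by omega
      · intro j
        rcases eq_or_ne j 0 with rfl | h
        · rw [hQ0]; exact ⟨hxT, hyT⟩
        · rw [show Q j = P' (j.pred h) from dif_neg h]
          exact hapex' _
      · intro j
        rcases eq_or_ne j 0 with rfl | h
        · rw [hQ0]; exact halt₀
        · rw [show Q j = P' (j.pred h) from dif_neg h]
          exact halt' _
      · intro j
        rcases eq_or_ne j 0 with rfl | h
        · rw [hQ0]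
          intro z hz
          rcases hz with hz | hz
          · have : z ∈ T ∧ z ∉ U := by
              rcases hz with rfl | rfl
              · exact ⟨hxT, hxU⟩
              · exact ⟨hyT, hyU⟩
            exact Or.inr ⟨this.1, this.2⟩
          · have hzC : z ∈ C := hrange z hz
            rcases hCsplit z hzC with h | h
            · exact Or.inl (Or.inl (hCAsub h))
            · exact Or.inl (Or.inr (hCBsub h))
        · rw [show Q j = P' (j.pred h) from dif_neg h]
          intro z hz
          have := hverts' (j.pred h) hz
          rcases this with h' | h'
          · rcases h' with h' | h'
            · exact Or.inl (Or.inl ((Finset.mem_sdiff.1 h').1))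
            · exact Or.inl (Or.inr ((Finset.mem_sdiff.1 h').1))
          · refine Or.inr ⟨h'.1, fun hzU => h'.2 ?_⟩
            exact Finset.mem_insert.2 (Or.inr (Finset.mem_insert.2 (Or.inr hzU)))
      · -- pairwise disjoint
        intro j₁ j₂ hne
        rcases eq_or_ne j₁ 0 with rfl | h1 <;> rcases eq_or_ne j₂ 0 with rfl | h2
        · exact absurd rfl hne
        · rw [hQ0, show Q j₂ = P' (j₂.pred h2) from dif_neg h2]
          rw [Set.disjoint_left]
          intro z hz hz'
          exact hdisj₀ z hz (hverts' _ hz')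
        · rw [hQ0, show Q j₁ = P' (j₁.pred h1) from dif_neg h1]
          rw [Set.disjoint_right]
          intro z hz hz'
          exact hdisj₀ z hz (hverts' _ hz')
        · rw [show Q j₁ = P' (j₁.pred h1) from dif_neg h1,
            show Q j₂ = P' (j₂.pred h2) from dif_neg h2]
          apply hdisj'
          intro hcon
          apply hne
          rw [← Fin.succ_pred j₁ h1, ← Fin.succ_pred j₂ h2, hcon]
      · -- covered vertices of A₀
        have hsub1 : (↑CA : Set V) ⊆ {a : V | a ∈ A₀ ∧ ∃ j, a ∈ (Q j).verts} := by
          intro z hz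
          have hz' : z ∈ CA := hz
          refine ⟨hCAsub hz', 0, ?_⟩
          rw [hQ0]
          obtain ⟨i, _, rfl⟩ := Finset.mem_image.1 (Finset.mem_filter.1 hz').1
          exact Or.inr ⟨i, rfl⟩
        have hsub2 : {a : V | a ∈ A₀' ∧ ∃ j', a ∈ (P' j').verts} ⊆
            {a : V | a ∈ A₀ ∧ ∃ j, a ∈ (Q j).verts} := by
          rintro z ⟨hz1, j', hz2⟩
          exact ⟨(Finset.mem_sdiff.1 hz1).1, j'.succ, by rw [hQs j']; exact hz2⟩
        have hdisjCA : Disjoint (↑CA : Set V) {a : V | a ∈ A₀' ∧ ∃ j', a ∈ (P' j').verts} := by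
          rw [Set.disjoint_left]
          rintro z hz ⟨hz1, _⟩
          exact (Finset.mem_sdiff.1 hz1).2 hz
        have hunion : ((↑CA : Set V) ∪ {a : V | a ∈ A₀' ∧ ∃ j', a ∈ (P' j').verts}).ncard =
            CA.card + ({a : V | a ∈ A₀' ∧ ∃ j', a ∈ (P' j').verts}).ncard := by
          rw [Set.ncard_union_eq hdisjCA (Set.toFinite _) (Set.toFinite _),
            Set.ncard_coe_finset]
        have hmono : ((↑CA : Set V) ∪ {a : V | a ∈ A₀' ∧ ∃ j', a ∈ (P' j').verts}).ncard ≤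
            ({a : V | a ∈ A₀ ∧ ∃ j, a ∈ (Q j).verts}).ncard := by
          apply Set.ncard_le_ncard (Set.union_subset hsub1 hsub2) (Set.toFinite _)
        have hcast : ((k - r : ℕ) : ℝ) = (k:ℝ) - r := by
          have : r ≤ k := hrk'
          push_cast [Nat.cast_sub this]
          ring
        rw [hcast] at hcovA'
        have : ((k:ℝ) - r) - ε * n + r ≤
            (({a : V | a ∈ A₀ ∧ ∃ j, a ∈ (Q j).verts}).ncard : ℝ) := by
          have e1 : (CA.card : ℝ) = r := by exact_mod_cast hCAcard
          have e2 : ((((↑CA : Set V) ∪ {a : V | a ∈ A₀' ∧ ∃ j', a ∈ (P' j').verts}).ncard : ℕ) : ℝ) =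
              (r : ℝ) + (({a : V | a ∈ A₀' ∧ ∃ j', a ∈ (P' j').verts}).ncard : ℝ) := by
            rw [hunion]
            push_cast [e1]
            ring
          have e3 : ((((↑CA : Set V) ∪ {a : V | a ∈ A₀' ∧ ∃ j', a ∈ (P' j').verts}).ncard : ℕ) : ℝ) ≤
              (({a : V | a ∈ A₀ ∧ ∃ j, a ∈ (Q j).verts}).ncard : ℝ) := by
            exact_mod_cast hmono
          linarith only [hcovA', e2, e3]
        linarith only [this]
      · -- covered vertices of B₀
        have hsub1 : (↑CB : Set V) ⊆ {b : V | b ∈ B₀ ∧ ∃ j, b ∈ (Q j).verts} := by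
          intro z hz
          have hz' : z ∈ CB := hz
          refine ⟨hCBsub hz', 0, ?_⟩
          rw [hQ0]
          obtain ⟨i, _, rfl⟩ := Finset.mem_image.1 (Finset.mem_filter.1 hz').1
          exact Or.inr ⟨i, rfl⟩
        have hsub2 : {b : V | b ∈ B₀' ∧ ∃ j', b ∈ (P' j').verts} ⊆
            {b : V | b ∈ B₀ ∧ ∃ j, b ∈ (Q j).verts} := by
          rintro z ⟨hz1, j', hz2⟩
          exact ⟨(Finset.mem_sdiff.1 hz1).1, j'.succ, by rw [hQs j']; exact hz2⟩
        have hdisjCB : Disjoint (↑CB : Set V) {b : V | b ∈ B₀' ∧ ∃ j', b ∈ (P' j').verts} := by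
          rw [Set.disjoint_left]
          rintro z hz ⟨hz1, _⟩
          exact (Finset.mem_sdiff.1 hz1).2 hz
        have hunion : ((↑CB : Set V) ∪ {b : V | b ∈ B₀' ∧ ∃ j', b ∈ (P' j').verts}).ncard =
            CB.card + ({b : V | b ∈ B₀' ∧ ∃ j', b ∈ (P' j').verts}).ncard := by
          rw [Set.ncard_union_eq hdisjCB (Set.toFinite _) (Set.toFinite _),
            Set.ncard_coe_finset]
        have hmono : ((↑CB : Set V) ∪ {b : V | b ∈ B₀' ∧ ∃ j', b ∈ (P' j').verts}).ncard ≤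
            ({b : V | b ∈ B₀ ∧ ∃ j, b ∈ (Q j).verts}).ncard := by
          apply Set.ncard_le_ncard (Set.union_subset hsub1 hsub2) (Set.toFinite _)
        have hcast : ((k - r : ℕ) : ℝ) = (k:ℝ) - r := by
          have : r ≤ k := hrk'
          push_cast [Nat.cast_sub this]
          ring
        rw [hcast] at hcovB'
        have : ((k:ℝ) - r) - ε * n + r ≤
            (({b : V | b ∈ B₀ ∧ ∃ j, b ∈ (Q j).verts}).ncard : ℝ) := by
          have e1 : (CB.card : ℝ) = r := by exact_mod_cast hCBcard
          have e2 : ((((↑CB : Set V) ∪ {b : V | b ∈ B₀' ∧ ∃ j', b ∈ (P' j').verts}).ncard : ℕ) : ℝ) =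
              (r : ℝ) + (({b : V | b ∈ B₀' ∧ ∃ j', b ∈ (P' j').verts}).ncard : ℝ) := by
            rw [hunion]
            push_cast [e1]
            ring
          have e3 : ((((↑CB : Set V) ∪ {b : V | b ∈ B₀' ∧ ∃ j', b ∈ (P' j').verts}).ncard : ℕ) : ℝ) ≤
              (({b : V | b ∈ B₀ ∧ ∃ j, b ∈ (Q j).verts}).ncard : ℝ) := by
            exact_mod_cast hmono
          linarith only [hcovB', e2, e3]
        linarith only [this]

theorem statement7 (δ ε η : ℝ) (hδ0 : 0 < δ) (hδ1 : δ < 1) (hε0 : 0 < ε) (hε1 : ε < 1)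
    (hη0 : 0 < η) (hη1 : η < 1) :
    ∃ n₀ : ℕ, ∀ n : ℕ, n₀ ≤ n →
      ∀ (V : Type) [Fintype V] [DecidableEq V] (A B T : Finset V) (E : Finset (Finset V)),
        Disjoint A B → Disjoint A T → Disjoint B T →
        (∀ e ∈ E, ∃ a ∈ A, ∃ b ∈ B, ∃ t ∈ T, e = {a, b, t}) →
        A.card = n → B.card = n → ε * n ≤ (T.card : ℝ) →
        (∀ A' ⊆ A, ∀ B' ⊆ B, ε * n ≤ (A'.card : ℝ) → ε * n ≤ (B'.card : ℝ) →
          δ * A'.card * B'.card * T.card ≤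
            ((E.filter fun e => (∃ a ∈ A', a ∈ e) ∧ ∃ b ∈ B', b ∈ e).card : ℝ)) →
        ∃ (N : ℕ) (P : Fin N → DoublePyramid V E),
          (N : ℝ) ≤ η * n ∧
          (∀ j, (P j).x ∈ T ∧ (P j).y ∈ T) ∧
          (∀ j i, ((P j).v i ∈ A ∧ (P j).v (i + 1) ∈ B) ∨
                  ((P j).v i ∈ B ∧ (P j).v (i + 1) ∈ A)) ∧
          (∀ j₁ j₂, j₁ ≠ j₂ → Disjoint (P j₁).verts (P j₂).verts) ∧
          (1 - ε) * n ≤ (({a : V | a ∈ A ∧ ∃ j, a ∈ (P j).verts}).ncard : ℝ) ∧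
          (1 - ε) * n ≤ (({b : V | b ∈ B ∧ ∃ j, b ∈ (P j).verts}).ncard : ℝ) := by
  classical
  set M : ℕ := 2 * (⌈8 / (δ * ε^3)⌉₊ + ⌈1 / η⌉₊ + 2) with hM
  have hδε3 : (0:ℝ) < δ * ε^3 := by positivity
  have hM2 : 2 ≤ M := by omega
  have hMcast : (M:ℝ) = 2 * ((⌈8 / (δ * ε^3)⌉₊ : ℝ) + (⌈1 / η⌉₊ : ℝ) + 2) := by
    rw [hM]; push_cast; ring
  have hM16 : 16 ≤ δ * ε^3 * M := by
    have hc1 : 8 / (δ * ε^3) ≤ (⌈8 / (δ * ε^3)⌉₊ : ℝ) := Nat.le_ceil _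
    have hc2 : (0:ℝ) ≤ (⌈1 / η⌉₊ : ℝ) := Nat.cast_nonneg _
    have hMge : 16 / (δ * ε^3) ≤ (M:ℝ) := by
      rw [hMcast]
      have : 16 / (δ * ε^3) = 2 * (8 / (δ * ε^3)) := by ring
      rw [this]
      linarith only [hc1, hc2]
    have := (div_le_iff₀ hδε3).1 hMge
    linarith only [this]
  have hηM : 2 ≤ η * M := by
    have hc1 : 1 / η ≤ (⌈1 / η⌉₊ : ℝ) := Nat.le_ceil _
    have hc2 : (0:ℝ) ≤ (⌈8 / (δ * ε^3)⌉₊ : ℝ) := Nat.cast_nonneg _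
    have hMge : 2 / η ≤ (M:ℝ) := by
      rw [hMcast]
      have : 2 / η = 2 * (1 / η) := by ring
      rw [this]
      linarith only [hc1, hc2]
    have := (div_le_iff₀ hη0).1 hMge
    linarith only [this]
  refine ⟨⌈8 / (δ^2 * ε^3) + 64 * M / (δ^2 * ε^2) + 1⌉₊, ?_⟩
  intro n hn V _ _ A B T E hAB hAT hBT hpart hcardA hcardB hT hdens
  have hn1 : 8 / (δ^2 * ε^3) + 64 * M / (δ^2 * ε^2) + 1 ≤ (n:ℝ) := by
    calc 8 / (δ^2 * ε^3) + 64 * M / (δ^2 * ε^2) + 1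
        ≤ (⌈8 / (δ^2 * ε^3) + 64 * M / (δ^2 * ε^2) + 1⌉₊ : ℝ) := Nat.le_ceil _
      _ ≤ (n:ℝ) := by exact_mod_cast hn
  obtain ⟨N, P, hMN, hapex, halt, hverts, hdisj, hcovA, hcovB⟩ :=
    cover δ ε hδ0 hδ1 hε0 hε1 n M hM2 A B T E hAB hAT hBT hpart hcardA hcardB hT hdens
      hn1 hM16 n A B ∅ (le_refl _) (le_refl _) (Finset.empty_subset _)
      hcardA hcardB (by simp)
  refine ⟨N, P, ?_, hapex, halt, hdisj, ?_, ?_⟩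
  · -- N ≤ η n
    have hMpos : (0:ℝ) < M := by
      have : (0:ℕ) < M := by omega
      exact_mod_cast this
    have h1 : (M:ℝ) * N ≤ 2 * n := by exact_mod_cast hMN
    have h2 : 2 * (n:ℝ) ≤ η * M * n :=
      mul_le_mul_of_nonneg_right hηM (Nat.cast_nonneg n)
    have h3 : (M:ℝ) * N ≤ (M:ℝ) * (η * n) := by nlinarith only [h1, h2]
    exact le_of_mul_le_mul_left h3 hMpos
  · have : (1 - ε) * (n:ℝ) = (n:ℝ) - ε * n := by ring
    rw [this]
    exact hcovA
  · have : (1 - ε) * (n:ℝ) = (n:ℝ) - ε * n := by ring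
    rw [this]
    exact hcovB
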